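/- arXiv:2212.03939 — 4 statements merged into one kernel-verified Lean document; each statement's English description precedes it below -/
import Mathlib

section
/- Let V ⊆ F_q^n be a set of vectors such that any n distinct vectors of V are linearly independent over F_q. Let k satisfy 2k ≤ n. If V, W ∈ V^k each consist of k pairwise distinct vectors, y, y' ∈ (F_q^×)^k, and ∑_{i=1}^k y_i v_i = ∑_{i=1}^k y'_i w_i, then the multiset {v_1,...,v_k} equals {w_1,...,w_k}, and after permuting indices so that v_i = w_i for all i, one has y_i = y'_i for all i. -/
theorem good_preimage_unique_up_to_permutation
    (F : Type*) [Field F] (n k : ℕ) (V : Set (Fin n → F))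
    (hV : ∀ S : Finset (Fin n → F), ↑S ⊆ V → S.card ≤ n →
      LinearIndependent F (fun s : S => (s : Fin n → F)))
    (hk : 2 * k ≤ n)
    (v w : Fin k → (Fin n → F)) (y y' : Fin k → F)
    (hv : ∀ i, v i ∈ V) (hw : ∀ i, w i ∈ V)
    (hvinj : Function.Injective v) (hwinj : Function.Injective w)
    (hy : ∀ i, y i ≠ 0) (hy' : ∀ i, y' i ≠ 0)
    (hZ : ∑ i, y i • v i = ∑ i, y' i • w i) :
    ∃ π : Equiv.Perm (Fin k), ∀ i, w (π i) = v i ∧ y' (π i) = y i := by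
  classical
  set S : Finset (Fin n → F) :=
    (Finset.image v Finset.univ) ∪ (Finset.image w Finset.univ) with hS
  have hSV : ↑S ⊆ V := by
    intro x hx
    simp only [hS, Finset.coe_union, Set.mem_union, Finset.coe_image,
      Set.mem_image, Finset.mem_coe, Finset.mem_univ, true_and] at hx
    rcases hx with ⟨i, rfl⟩ | ⟨i, rfl⟩
    · exact hv i
    · exact hw i
  have hScard : S.card ≤ n := by
    calc S.card ≤ (Finset.image v Finset.univ).card + (Finset.image w Finset.univ).card :=
          Finset.card_union_le _ _
      _ ≤ k + k := by
          have h1 := Finset.card_image_le (s := (Finset.univ : Finset (Fin k))) (f := v)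
          have h2 := Finset.card_image_le (s := (Finset.univ : Finset (Fin k))) (f := w)
          simp only [Finset.card_univ, Fintype.card_fin] at h1 h2
          omega
      _ ≤ n := by omega
  have hli := hV S hSV hScard
  set c : (Fin n → F) → F := fun x =>
    (∑ i, if v i = x then y i else 0) - (∑ i, if w i = x then y' i else 0) with hc
  have hvS : ∀ i, v i ∈ S := fun i => by
    simp [hS, Finset.mem_union, Finset.mem_image]
  have hwS : ∀ i, w i ∈ S := fun i => by
    simp [hS, Finset.mem_union, Finset.mem_image]
  have key : ∀ (u : Fin k → (Fin n → F)) (z : Fin k → F), (∀ i, u i ∈ S) →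
      ∑ x ∈ S, (∑ i, if u i = x then z i else 0) • x = ∑ i, z i • u i := by
    intro u z hu
    simp only [Finset.sum_smul]
    rw [Finset.sum_comm]
    refine Finset.sum_congr rfl fun i _ => ?_
    calc ∑ x ∈ S, (if u i = x then z i else 0) • x
        = ∑ x ∈ S, (if u i = x then z i • x else 0) := by
          refine Finset.sum_congr rfl fun x _ => ?_
          split <;> simp
      _ = z i • u i := by rw [Finset.sum_ite_eq]; simp [hu i]
  have hsum : ∑ x ∈ S, c x • x = 0 := by
    simp only [hc, sub_smul, Finset.sum_sub_distrib]
    rw [key v y hvS, key w y' hwS, hZ, sub_self]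
  have hc0 : ∀ x ∈ S, c x = 0 := by
    intro x hx
    have h := linearIndependent_iff'.mp hli Finset.univ (fun s => c ↑s) ?_ ⟨x, hx⟩
      (Finset.mem_univ _)
    · exact h
    · rw [← Finset.sum_attach S (fun x => c x • x)] at hsum
      exact hsum
  have hcv : ∀ i, c (v i) = y i - ∑ j, (if w j = v i then y' j else 0) := by
    intro i
    have : (∑ j, if v j = v i then y j else 0) = y i := by
      rw [Finset.sum_eq_single i]
      · simp
      · intro j _ hj
        exact if_neg (fun h => hj (hvinj h))
      · simp
    simp [hc, this]
  have hex : ∀ i, ∃ j, w j = v i := by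
    intro i
    by_contra h
    push_neg at h
    have h0 := hc0 (v i) (hvS i)
    rw [hcv i] at h0
    have : (∑ j, if w j = v i then y' j else 0) = 0 := by
      apply Finset.sum_eq_zero
      intro j _
      simp [h j]
    rw [this, sub_zero] at h0
    exact hy i h0
  choose π₀ hπ₀ using hex
  have hπinj : Function.Injective π₀ := by
    intro i j hij
    apply hvinj
    rw [← hπ₀ i, ← hπ₀ j, hij]
  have hπbij : Function.Bijective π₀ := Finite.injective_iff_bijective.mp hπinj
  refine ⟨Equiv.ofBijective π₀ hπbij, fun i => ⟨hπ₀ i, ?_⟩⟩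
  have h0 := hc0 (v i) (hvS i)
  rw [hcv i] at h0
  have : (∑ j, if w j = v i then y' j else 0) = y' (π₀ i) := by
    rw [Finset.sum_eq_single (π₀ i)]
    · simp [hπ₀ i]
    · intro j _ hj
      have : w j ≠ v i := fun h => hj (hwinj (h.trans (hπ₀ i).symm))
      simp [this]
    · simp
  rw [this] at h0
  simp only [Equiv.ofBijective_apply]
  exact (sub_eq_zero.mp h0).symm
end

section
/- Let V ⊆ F_q^n with the property that any n distinct vectors of V are linearly independent, and let 2k ≤ n. Define Z : V^k × F_q^k → F_q^n by Z(V,y) = ∑ y_i v_i, and for z ∈ F_q^n let G(z) be the set of preimages (V,y) of z with the v_i pairwise distinct and all y_i nonzero. Then for every z ∈ F_q^n, |G(z)| is either 0 or k!. -/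
open Finset Function

private lemma good_perm
    {F : Type*} [Field F] {n k : ℕ} {V : Set (Fin n → F)}
    (hV : ∀ S : Finset (Fin n → F), ↑S ⊆ V → S.card ≤ n →
      LinearIndependent F (fun s : S => (s : Fin n → F)))
    (hk : 2 * k ≤ n) {z : Fin n → F}
    {v v' : Fin k → Fin n → F} {y y' : Fin k → F}
    (hv : ∀ i, v i ∈ V) (hvinj : Function.Injective v)
    (hz : ∑ i, y i • v i = z)
    (hv' : ∀ i, v' i ∈ V) (hvinj' : Function.Injective v')
    (hy' : ∀ i, y' i ≠ 0) (hz' : ∑ i, y' i • v' i = z) :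
    ∃ σ : Equiv.Perm (Fin k), v' = v ∘ σ ∧ y' = y ∘ σ := by
  classical
  set f : (Fin n → F) →₀ F := ∑ i, Finsupp.single (v i) (y i) with hf
  set g : (Fin n → F) →₀ F := ∑ i, Finsupp.single (v' i) (y' i) with hg
  set T : Finset (Fin n → F) := Finset.image v Finset.univ ∪ Finset.image v' Finset.univ with hT
  have hTV : ↑T ⊆ V := by
    intro x hx
    simp only [hT, coe_union, coe_image, coe_univ, Set.image_univ, Set.mem_union,
      Set.mem_range] at hx
    rcases hx with ⟨i, rfl⟩ | ⟨i, rfl⟩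
    · exact hv i
    · exact hv' i
  have hTcard : T.card ≤ n := by
    refine le_trans (le_trans (Finset.card_union_le _ _) ?_) hk
    have h1 := Finset.card_image_le (s := (Finset.univ : Finset (Fin k))) (f := v)
    have h2 := Finset.card_image_le (s := (Finset.univ : Finset (Fin k))) (f := v')
    simp only [Finset.card_univ, Fintype.card_fin] at h1 h2
    omega
  have hLI := hV T hTV hTcard
  have hLI' : LinearIndependent F (fun x => x : (↑T : Set (Fin n → F)) → (Fin n → F)) := hLI
  replace hLI' := linearIndepOn_iff.mp (show LinearIndepOn F id (↑T : Set (Fin n → F)) from hLI')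
  have hfsum : (Finsupp.linearCombination F id) f = z := by
    rw [hf, map_sum]
    simp only [Finsupp.linearCombination_single, id_eq]
    exact hz
  have hgsum : (Finsupp.linearCombination F id) g = z := by
    rw [hg, map_sum]
    simp only [Finsupp.linearCombination_single, id_eq]
    exact hz'
  have hfsupp : f - g ∈ Finsupp.supported F F (↑T : Set (Fin n → F)) := by
    rw [Finsupp.mem_supported]
    refine subset_trans (Finset.coe_subset.mpr Finsupp.support_sub) ?_
    intro x hx
    simp only [Finset.coe_union, Set.mem_union, Finset.mem_coe] at hx
    rcases hx with hx | hx
    · have := Finset.mem_of_subset Finsupp.support_finset_sum hx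
      simp only [Finset.mem_biUnion] at this
      obtain ⟨i, -, hi⟩ := this
      have := Finsupp.support_single_subset hi
      simp only [Finset.mem_singleton] at this
      subst this
      simp [hT]
    · have := Finset.mem_of_subset Finsupp.support_finset_sum hx
      simp only [Finset.mem_biUnion] at this
      obtain ⟨i, -, hi⟩ := this
      have := Finsupp.support_single_subset hi
      simp only [Finset.mem_singleton] at this
      subst this
      simp [hT]
  have hfg : f = g := by
    have := hLI' (f - g) hfsupp (by rw [map_sub, hfsum, hgsum, sub_self])
    exact sub_eq_zero.mp this
  -- evaluate g at v' i
  have hgval : ∀ i, g (v' i) = y' i := by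
    intro i
    rw [hg]
    rw [Finsupp.finset_sum_apply]
    rw [Finset.sum_eq_single i]
    · simp [Finsupp.single_apply]
    · intro j _ hj
      rw [Finsupp.single_apply, if_neg (fun h => hj (hvinj' h))]
    · simp
  have hfval : ∀ x, (∀ j, v j ≠ x) → f x = 0 := by
    intro x hx
    rw [hf, Finsupp.finset_sum_apply]
    apply Finset.sum_eq_zero
    intro j _
    rw [Finsupp.single_apply, if_neg (hx j)]
  have hfval' : ∀ j, f (v j) = y j := by
    intro j
    rw [hf, Finsupp.finset_sum_apply]
    rw [Finset.sum_eq_single j]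
    · simp [Finsupp.single_apply]
    · intro m _ hm
      rw [Finsupp.single_apply, if_neg (fun h => hm (hvinj h))]
    · simp
  have hexists : ∀ i, ∃ j, v j = v' i := by
    intro i
    by_contra h
    push_neg at h
    have h0 : f (v' i) = 0 := hfval _ h
    rw [hfg, hgval] at h0
    exact hy' i h0
  choose π hπ using hexists
  have hπinj : Function.Injective π := by
    intro a b hab
    apply hvinj'
    rw [← hπ a, ← hπ b, hab]
  have hπbij : Function.Bijective π := (Finite.injective_iff_bijective).mp hπinj
  refine ⟨Equiv.ofBijective π hπbij, ?_, ?_⟩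
  · funext i
    simp only [comp_apply, Equiv.ofBijective_apply]
    exact (hπ i).symm
  · funext i
    simp only [comp_apply, Equiv.ofBijective_apply]
    have := hgval i
    rw [← hfg, ← hπ i, hfval'] at this
    exact this.symm

theorem good_fiber_count_zero_or_factorial
    (F : Type*) [Field F] (n k : ℕ) (V : Set (Fin n → F))
    (hV : ∀ S : Finset (Fin n → F), ↑S ⊆ V → S.card ≤ n →
      LinearIndependent F (fun s : S => (s : Fin n → F)))
    (hk : 2 * k ≤ n) (z : Fin n → F) :
    (Set.ncard {p : (Fin k → (Fin n → F)) × (Fin k → F) |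
        (∀ i, p.1 i ∈ V) ∧ Function.Injective p.1 ∧ (∀ i, p.2 i ≠ 0) ∧
        ∑ i, p.2 i • p.1 i = z} = 0) ∨
    (Set.ncard {p : (Fin k → (Fin n → F)) × (Fin k → F) |
        (∀ i, p.1 i ∈ V) ∧ Function.Injective p.1 ∧ (∀ i, p.2 i ≠ 0) ∧
        ∑ i, p.2 i • p.1 i = z} = Nat.factorial k) := by
  classical
  set G : Set ((Fin k → (Fin n → F)) × (Fin k → F)) :=
    {p | (∀ i, p.1 i ∈ V) ∧ Function.Injective p.1 ∧ (∀ i, p.2 i ≠ 0) ∧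
        ∑ i, p.2 i • p.1 i = z} with hG
  by_cases hne : G.Nonempty
  · right
    obtain ⟨⟨v, y⟩, hv, hvinj, hy, hz⟩ := hne
    have key : ∀ p ∈ G, ∃ σ : Equiv.Perm (Fin k), p.1 = v ∘ σ ∧ p.2 = y ∘ σ := by
      rintro ⟨v', y'⟩ ⟨hv', hvinj', hy', hz'⟩
      exact good_perm hV hk hv hvinj hz hv' hvinj' hy' hz'
    have hmem : ∀ σ : Equiv.Perm (Fin k), (v ∘ σ, y ∘ σ) ∈ G := by
      intro σ
      refine ⟨fun i => hv _, hvinj.comp σ.injective, fun i => hy _, ?_⟩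
      show ∑ i, y (σ i) • v (σ i) = z
      rw [← hz]
      exact Fintype.sum_equiv σ _ _ (fun i => rfl)
    have hbij : Function.Bijective
        (fun σ : Equiv.Perm (Fin k) => (⟨(v ∘ σ, y ∘ σ), hmem σ⟩ : G)) := by
      constructor
      · intro σ τ hστ
        have h1 : v ∘ σ = v ∘ τ := congrArg (fun p => (p : _ × _).1) (Subtype.ext_iff.mp hστ)
        exact Equiv.ext fun i => hvinj (congrFun h1 i)
      · rintro ⟨p, hp⟩
        obtain ⟨σ, h1, h2⟩ := key p hp
        exact ⟨σ, Subtype.ext (Prod.ext h1.symm h2.symm)⟩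
    have := Nat.card_eq_of_bijective _ hbij
    rw [← Nat.card_coe_set_eq, ← this, Nat.card_eq_fintype_card, Fintype.card_perm,
      Fintype.card_fin]
  · left
    rw [Set.not_nonempty_iff_eq_empty] at hne
    rw [hne, Set.ncard_empty]
end

section
/- Let V ⊆ F_q^n be finite and suppose for every nonzero t ∈ F_q^n, #{v ∈ V : t·v = 0} ≤ B. Then the second moment satisfies ∑_{z ∈ F_q^n} |Z^{-1}(z)|² ≤ (|V|q)^{2k}/q^n + (Bq)^{2k}, where Z(V,y) = ∑ y_i v_i. -/
open Finset

lemma ker_dual_card {F : Type*} [Field F] [Fintype F] [DecidableEq F]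
    {n : ℕ} {I : Type*} [Fintype I] [DecidableEq I] (u : I → (Fin n → F)) :
    (Finset.univ.filter (fun c : I → F => ∑ i, c i • u i = 0)).card * (Fintype.card F)^n
    = (Fintype.card F)^(Fintype.card I) *
      (Finset.univ.filter (fun t : Fin n → F => ∀ i, ∑ j, t j * u i j = 0)).card := by
  classical
  set q := Fintype.card F with hq
  set A : Matrix (Fin n) I F := Matrix.of (fun j i => u i j) with hA
  have h1 : (Finset.univ.filter (fun c : I → F => ∑ i, c i • u i = 0)).card
      = Fintype.card (LinearMap.ker A.mulVecLin) := by
    rw [← Fintype.card_subtype]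
    apply Fintype.card_congr
    apply Equiv.subtypeEquivRight
    intro c
    rw [LinearMap.mem_ker, Matrix.mulVecLin_apply]
    constructor
    · intro h
      funext j
      have := congrFun h j
      simpa [Matrix.mulVec, dotProduct, A, mul_comm] using this
    · intro h
      funext j
      have := congrFun h j
      simpa [Matrix.mulVec, dotProduct, A, mul_comm] using this
  have h2 : (Finset.univ.filter (fun t : Fin n → F => ∀ i, ∑ j, t j * u i j = 0)).card
      = Fintype.card (LinearMap.ker A.transpose.mulVecLin) := by
    rw [← Fintype.card_subtype]
    apply Fintype.card_congr
    apply Equiv.subtypeEquivRight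
    intro t
    rw [LinearMap.mem_ker, Matrix.mulVecLin_apply]
    constructor
    · intro h
      funext i
      simpa [Matrix.mulVec, dotProduct, mul_comm, A] using h i
    · intro h i
      have := congrFun h i
      simpa [Matrix.mulVec, dotProduct, mul_comm, A] using this
  have c1 : Fintype.card (LinearMap.ker A.mulVecLin) = q ^ Module.finrank F (LinearMap.ker A.mulVecLin) :=
    Module.card_eq_pow_finrank
  have c2 : Fintype.card (LinearMap.ker A.transpose.mulVecLin) = q ^ Module.finrank F (LinearMap.ker A.transpose.mulVecLin) :=
    Module.card_eq_pow_finrank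
  have r1 : A.rank + Module.finrank F (LinearMap.ker A.mulVecLin) = Fintype.card I := by
    rw [Matrix.rank, LinearMap.finrank_range_add_finrank_ker, Module.finrank_pi]
  have r2 : A.transpose.rank + Module.finrank F (LinearMap.ker A.transpose.mulVecLin) = n := by
    rw [Matrix.rank, LinearMap.finrank_range_add_finrank_ker, Module.finrank_pi, Fintype.card_fin]
  have rt : A.transpose.rank = A.rank := Matrix.rank_transpose A
  clear_value q A
  have he : Module.finrank F (LinearMap.ker A.mulVecLin) + n
      = Fintype.card I + Module.finrank F (LinearMap.ker A.transpose.mulVecLin) := by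
    obtain ⟨a, ha⟩ : ∃ a, Module.finrank F (LinearMap.ker A.mulVecLin) = a := ⟨_, rfl⟩
    obtain ⟨b, hb⟩ : ∃ b, Module.finrank F (LinearMap.ker A.transpose.mulVecLin) = b := ⟨_, rfl⟩
    obtain ⟨r, hr⟩ : ∃ r, A.rank = r := ⟨_, rfl⟩
    rw [rt, hr, hb] at r2
    rw [hr, ha] at r1
    rw [ha, hb]
    clear h1 h2 c1 c2 hA hq rt ha hb hr
    omega
  rw [h1, h2, c1, c2, ← pow_add, ← pow_add, he]


open scoped Classical in
theorem second_moment_upper_bound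
    (F : Type*) [Field F] [Fintype F] (n k : ℕ) (hk : 1 ≤ k)
    (V : Finset (Fin n → F)) (B : ℕ)
    (hB : ∀ t : Fin n → F, t ≠ 0 → (V.filter (fun v => ∑ j, t j * v j = 0)).card ≤ B) :
    ∑ z : Fin n → F,
      ((Set.ncard {p : (Fin k → (Fin n → F)) × (Fin k → F) |
          (∀ i, p.1 i ∈ V) ∧ ∑ i, p.2 i • p.1 i = z} : ℝ)) ^ 2
    ≤ ((V.card : ℝ) * (Fintype.card F : ℝ)) ^ (2 * k) / (Fintype.card F : ℝ) ^ n
      + ((B : ℝ) * (Fintype.card F : ℝ)) ^ (2 * k) := by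
  classical
  set q := Fintype.card F with hq
  have hq0 : 0 < q := Fintype.card_pos
  set Ω := (Fin k → (Fin n → F)) × (Fin k → F) with hΩ
  set I := (Fin k ⊕ Fin k) with hI
  set N : (Fin n → F) → ℕ := fun z =>
    (Finset.univ.filter (fun p : Ω =>
      (∀ i, p.1 i ∈ V) ∧ ∑ i, p.2 i • p.1 i = z)).card with hN
  have stepA : ∀ z : Fin n → F,
      (Set.ncard {p : Ω | (∀ i, p.1 i ∈ V) ∧ ∑ i, p.2 i • p.1 i = z}) = N z := by
    intro z
    rw [Set.ncard_eq_toFinset_card']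
    congr 1
    ext p
    simp [N]
  set D : Finset (Ω × Ω) := Finset.univ.filter (fun pq : Ω × Ω =>
      ((∀ i, pq.1.1 i ∈ V) ∧ (∀ i, pq.2.1 i ∈ V)) ∧
        ∑ i, pq.1.2 i • pq.1.1 i = ∑ i, pq.2.2 i • pq.2.1 i) with hD
  have stepB : ∑ z : Fin n → F, (N z) ^ 2 = D.card := by
    rw [Finset.card_eq_sum_card_fiberwise
      (f := fun pq : Ω × Ω => ∑ i, pq.1.2 i • pq.1.1 i) (t := Finset.univ)
      (fun _ _ => Finset.mem_univ _)]
    refine Finset.sum_congr rfl fun z _ => ?_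
    have : D.filter (fun pq : Ω × Ω => ∑ i, pq.1.2 i • pq.1.1 i = z)
        = (Finset.univ.filter (fun p : Ω => (∀ i, p.1 i ∈ V) ∧ ∑ i, p.2 i • p.1 i = z)) ×ˢ
          (Finset.univ.filter (fun p : Ω => (∀ i, p.1 i ∈ V) ∧ ∑ i, p.2 i • p.1 i = z)) := by
      ext pq
      simp only [Finset.mem_filter, Finset.mem_product, Finset.mem_univ, true_and, hD]
      constructor
      · rintro ⟨⟨⟨h1, h2⟩, h3⟩, h4⟩
        exact ⟨⟨h1, h4⟩, ⟨h2, h3 ▸ h4⟩⟩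
      · rintro ⟨⟨h1, h4⟩, ⟨h2, h5⟩⟩
        exact ⟨⟨⟨h1, h2⟩, h4.trans h5.symm⟩, h4⟩
    rw [this, Finset.card_product]
    simp only [hN]
    ring
  set E : Finset ((I → (Fin n → F)) × (I → F)) := Finset.univ.filter
      (fun uc => (∀ i, uc.1 i ∈ V) ∧ ∑ i, uc.2 i • uc.1 i = 0) with hE
  have stepC : D.card = E.card := by
    refine Finset.card_bij'
      (fun pq _ => (Sum.elim pq.1.1 pq.2.1, Sum.elim pq.1.2 (fun i => - pq.2.2 i)))
      (fun uc _ => ((fun i => uc.1 (Sum.inl i), fun i => uc.2 (Sum.inl i)),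
                    (fun i => uc.1 (Sum.inr i), fun i => - uc.2 (Sum.inr i))))
      ?_ ?_ ?_ ?_
    · rintro ⟨p, r⟩ hpq
      simp only [hD, Finset.mem_filter, Finset.mem_univ, true_and] at hpq
      obtain ⟨⟨h1, h2⟩, h3⟩ := hpq
      simp only [hE, Finset.mem_filter, Finset.mem_univ, true_and]
      constructor
      · rintro (i | i)
        · exact h1 i
        · exact h2 i
      · rw [Fintype.sum_sum_type]
        simp only [Sum.elim_inl, Sum.elim_inr, neg_smul, Finset.sum_neg_distrib]
        simp [h3]
    · rintro ⟨u, c⟩ huc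
      simp only [hE, Finset.mem_filter, Finset.mem_univ, true_and] at huc
      obtain ⟨h1, h2⟩ := huc
      simp only [hD, Finset.mem_filter, Finset.mem_univ, true_and]
      refine ⟨⟨fun i => h1 _, fun i => h1 _⟩, ?_⟩
      rw [Fintype.sum_sum_type] at h2
      simp only [neg_smul, Finset.sum_neg_distrib]
      exact eq_neg_of_add_eq_zero_left h2
    · rintro ⟨p, r⟩ _
      refine Prod.ext (Prod.ext ?_ ?_) (Prod.ext ?_ ?_) <;> funext i <;> simp
    · rintro ⟨u, c⟩ _
      refine Prod.ext ?_ ?_ <;> funext i <;> cases i <;> simp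
  set K : (I → (Fin n → F)) → ℕ := fun u =>
    (Finset.univ.filter (fun c : I → F => ∑ i, c i • u i = 0)).card with hK
  set T : (I → (Fin n → F)) → ℕ := fun u =>
    (Finset.univ.filter (fun t : Fin n → F => ∀ i, ∑ j, t j * u i j = 0)).card with hT
  have stepD : E.card = ∑ u : I → (Fin n → F), if (∀ i, u i ∈ V) then K u else 0 := by
    rw [hE, Finset.card_filter, Fintype.sum_prod_type]
    refine Finset.sum_congr rfl fun u _ => ?_
    by_cases h : ∀ i, u i ∈ V
    · rw [if_pos h]
      simp only [hK]
      rw [Finset.card_filter]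
      refine Finset.sum_congr rfl fun c _ => ?_
      simp [h]
    · simp [h]
  have cardI : Fintype.card I = 2 * k := by
    simp [hI, two_mul]
  have stepE : ∀ u : I → (Fin n → F), K u * q ^ n = q ^ (2 * k) * T u := by
    intro u
    rw [hK, hT, ← cardI]
    exact ker_dual_card u
  have stepF : ∑ u : I → (Fin n → F), (if (∀ i, u i ∈ V) then T u else 0)
      = ∑ t : Fin n → F, ((V.filter (fun v => ∑ j, t j * v j = 0)).card) ^ (2 * k) := by
    have key : ∀ u : I → (Fin n → F), (if (∀ i, u i ∈ V) then T u else 0)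
        = ∑ t : Fin n → F,
            if (∀ i, u i ∈ V ∧ ∑ j, t j * u i j = 0) then 1 else 0 := by
      intro u
      by_cases h : ∀ i, u i ∈ V
      · rw [if_pos h]
        simp only [hT]
        rw [Finset.card_filter]
        refine Finset.sum_congr rfl fun t _ => ?_
        congr 1
        simp only [eq_iff_iff]
        constructor
        · intro h2 i
          exact ⟨h i, h2 i⟩
        · intro h2 i
          exact (h2 i).2
      · rw [if_neg h]
        symm
        refine Finset.sum_eq_zero fun t _ => ?_
        rw [if_neg]
        intro h2
        exact h fun i => (h2 i).1
    rw [Finset.sum_congr rfl fun u _ => key u, Finset.sum_comm]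
    refine Finset.sum_congr rfl fun t _ => ?_
    rw [← Finset.card_filter]
    have : Finset.univ.filter (fun u : I → (Fin n → F) =>
          ∀ i, u i ∈ V ∧ ∑ j, t j * u i j = 0)
        = Fintype.piFinset (fun _ : I => V.filter (fun v => ∑ j, t j * v j = 0)) := by
      ext u
      simp [Fintype.mem_piFinset]
    rw [this, Fintype.card_piFinset]
    simp [← cardI, Finset.prod_const]
  -- assemble the natural number inequality
  have Vt0 : V.filter (fun v => ∑ j, (0 : Fin n → F) j * v j = 0) = V := by
    refine Finset.filter_true_of_mem fun v _ => ?_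
    simp
  have sumT : ∑ t : Fin n → F, ((V.filter (fun v => ∑ j, t j * v j = 0)).card) ^ (2 * k)
      ≤ V.card ^ (2 * k) + q ^ n * B ^ (2 * k) := by
    rw [← Finset.sum_erase_add _ _ (Finset.mem_univ (0 : Fin n → F)), Vt0]
    rw [add_comm]
    refine Nat.add_le_add le_rfl ?_
    calc ∑ t ∈ Finset.univ.erase (0 : Fin n → F),
          ((V.filter (fun v => ∑ j, t j * v j = 0)).card) ^ (2 * k)
        ≤ ∑ t ∈ Finset.univ.erase (0 : Fin n → F), B ^ (2 * k) := by
          refine Finset.sum_le_sum fun t ht => ?_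
          exact Nat.pow_le_pow_left (hB t (Finset.mem_erase.mp ht).1) _
      _ = (Finset.univ.erase (0 : Fin n → F)).card * B ^ (2 * k) := by
          rw [Finset.sum_const, smul_eq_mul]
      _ ≤ q ^ n * B ^ (2 * k) := by
          refine Nat.mul_le_mul_right _ ?_
          calc (Finset.univ.erase (0 : Fin n → F)).card
              ≤ (Finset.univ : Finset (Fin n → F)).card := Finset.card_erase_le.trans le_rfl
            _ = q ^ n := by simp [hq, Fintype.card_pi]
  have main_nat : (∑ z : Fin n → F, (N z) ^ 2) * q ^ n
      ≤ q ^ (2 * k) * V.card ^ (2 * k) + q ^ (2 * k) * (q ^ n * B ^ (2 * k)) := by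
    rw [stepB, stepC, stepD, Finset.sum_mul]
    have : ∑ u : I → (Fin n → F), (if (∀ i, u i ∈ V) then K u else 0) * q ^ n
        = q ^ (2 * k) * ∑ u : I → (Fin n → F), (if (∀ i, u i ∈ V) then T u else 0) := by
      rw [Finset.mul_sum]
      refine Finset.sum_congr rfl fun u _ => ?_
      by_cases h : ∀ i, u i ∈ V
      · rw [if_pos h, if_pos h, stepE]
      · simp [h]
    rw [this, stepF, ← Nat.mul_add]
    exact Nat.mul_le_mul_left _ sumT
  -- pass to the reals
  have cast_goal : ∑ z : Fin n → F,
      ((Set.ncard {p : Ω | (∀ i, p.1 i ∈ V) ∧ ∑ i, p.2 i • p.1 i = z} : ℝ)) ^ 2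
      = ((∑ z : Fin n → F, (N z) ^ 2 : ℕ) : ℝ) := by
    push_cast
    refine Finset.sum_congr rfl fun z _ => ?_
    rw [stepA z]
  rw [cast_goal]
  have hqR : (0 : ℝ) < (q : ℝ) ^ n := by positivity
  rw [div_add' _ _ _ (ne_of_gt hqR), le_div_iff₀ hqR]
  have h1 := (Nat.cast_le (α := ℝ)).2 main_nat
  push_cast at h1
  push_cast
  calc (∑ z : Fin n → F, ((N z : ℝ)) ^ 2) * (q : ℝ) ^ n
      ≤ (q : ℝ) ^ (2 * k) * (V.card : ℝ) ^ (2 * k)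
        + (q : ℝ) ^ (2 * k) * ((q : ℝ) ^ n * (B : ℝ) ^ (2 * k)) := h1
    _ = ((V.card : ℝ) * (q : ℝ)) ^ (2 * k) + ((B : ℝ) * (q : ℝ)) ^ (2 * k) * (q : ℝ) ^ n := by
        rw [mul_pow, mul_pow]; ring
end

section
/- Suppose a state |φ_c⟩ is given with c chosen uniformly at random from a finite set C, and one measures with an orthogonal (projective) measurement with outcomes in C. Then the probability of correctly identifying c is at most dim span{|φ_c⟩ : c ∈ C} / |C|. -/
lemma aux_proj_sum_le {H : Type*} [NormedAddCommGroup H] [InnerProductSpace ℂ H]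
    [FiniteDimensional ℂ H] {C : Type*} [Fintype C]
    (P : C → Submodule ℂ H)
    (horth : ∀ c c', c ≠ c' → ∀ x ∈ P c, ∀ y ∈ P c', inner (𝕜 := ℂ) x y = 0)
    (x : H) :
    ∑ c : C, ‖((P c).orthogonalProjection x : H)‖ ^ 2 ≤ ‖x‖ ^ 2 := by
  set f : C → H := fun c => ((P c).orthogonalProjection x : H) with hf
  set s : H := ∑ c, f c with hs
  have hmem : ∀ c, f c ∈ P c := fun c => Submodule.coe_mem _
  have hinner : ∀ c, (inner ℂ x (f c) : ℂ) = (‖f c‖ : ℂ) ^ 2 := by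
    intro c
    have h := Submodule.inner_orthogonalProjection_eq_of_mem_right (K := P c)
      ((P c).orthogonalProjection x) x
    rw [Submodule.coe_inner] at h
    show (inner ℂ x (((P c).orthogonalProjection x : H)) : ℂ) = _
    rw [← h, inner_self_eq_norm_sq_to_K]
    norm_num
    rfl
  have hxs : (inner ℂ x s : ℂ) = (∑ c, ‖f c‖ ^ 2 : ℝ) := by
    rw [hs, inner_sum]
    push_cast
    exact Finset.sum_congr rfl fun c _ => hinner c
  have hss : ‖s‖ ^ 2 = ∑ c, ‖f c‖ ^ 2 := by
    have key : (inner ℂ s s : ℂ) = (∑ c, ‖f c‖ ^ 2 : ℝ) := by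
      rw [hs, sum_inner]
      push_cast
      refine Finset.sum_congr rfl fun c _ => ?_
      rw [inner_sum, Finset.sum_eq_single c]
      · rw [inner_self_eq_norm_sq_to_K]; norm_cast
      · intro b _ hb
        exact horth c b (Ne.symm hb) (f c) (hmem c) (f b) (hmem b)
      · intro h; exact absurd (Finset.mem_univ c) h
    have h3 : ‖s‖ ^ 2 = RCLike.re (K := ℂ) (inner ℂ s s) := (inner_self_eq_norm_sq (𝕜 := ℂ) s).symm
    rw [h3, key]
    simp [← Complex.ofReal_pow]
  set t : ℝ := ∑ c, ‖f c‖ ^ 2 with ht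
  have ht0 : 0 ≤ t := Finset.sum_nonneg fun c _ => sq_nonneg _
  have h1 : t ≤ ‖x‖ * ‖s‖ := by
    have hle := norm_inner_le_norm (𝕜 := ℂ) x s
    rw [hxs] at hle
    calc t = ‖((t : ℝ) : ℂ)‖ := by simp [abs_of_nonneg ht0]
    _ ≤ ‖x‖ * ‖s‖ := hle
  nlinarith [sq_nonneg (‖x‖ - ‖s‖), norm_nonneg s, norm_nonneg x]

theorem projective_measurement_success_bound
    (H : Type*) [NormedAddCommGroup H] [InnerProductSpace ℂ H]
    [FiniteDimensional ℂ H]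
    (C : Type*) [Fintype C] [Nonempty C]
    (φ : C → H) (hφ : ∀ c, ‖φ c‖ = 1)
    (P : C → Submodule ℂ H)
    (horth : ∀ c c', c ≠ c' → ∀ x ∈ P c, ∀ y ∈ P c', inner (𝕜 := ℂ) x y = 0) :
    (∑ c : C, ‖((P c).orthogonalProjection (φ c) : H)‖ ^ 2) / (Fintype.card C : ℝ)
      ≤ (Module.finrank ℂ (Submodule.span ℂ (Set.range φ)) : ℝ)
          / (Fintype.card C : ℝ) := by
  set V := Submodule.span ℂ (Set.range φ) with hV
  set n := Module.finrank ℂ V with hn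
  have hcard : (0 : ℝ) < Fintype.card C := by positivity
  gcongr
  -- ⊢ ∑ c, ‖(Q_{P c} (φ c) : H)‖ ^ 2 ≤ n
  set b := stdOrthonormalBasis ℂ V with hb
  have step1 : ∀ c : C, ‖((P c).orthogonalProjection (φ c) : H)‖ ^ 2
      ≤ ∑ i, ‖((P c).orthogonalProjection ((b i : H)) : H)‖ ^ 2 := by
    intro c
    set T : H →L[ℂ] H := (P c).subtypeL.comp ((P c).orthogonalProjection) with hT
    have hTeq : ∀ v : H, ((P c).orthogonalProjection v : H) = T v := fun v => rfl
    have hmemV : φ c ∈ V := Submodule.subset_span ⟨c, rfl⟩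
    set vV : V := ⟨φ c, hmemV⟩ with hvV
    set a : EuclideanSpace ℂ (Fin n) := b.repr vV with ha
    have hsum : ∑ i, a i • ((b i : V) : H) = φ c := by
      have := b.sum_repr vV
      have h2 := congrArg (Submodule.subtype V) this
      simpa using h2
    have hTsum : T (φ c) = ∑ i, a i • T ((b i : V) : H) := by
      rw [← hsum, map_sum]
      simp
    have hnorm : ‖T (φ c)‖ ≤ ∑ i, ‖a i‖ * ‖T ((b i : V) : H)‖ := by
      rw [hTsum]
      refine (norm_sum_le _ _).trans ?_
      refine Finset.sum_le_sum fun i _ => ?_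
      rw [norm_smul]
    have ha2 : ∑ i, ‖a i‖ ^ 2 = 1 := by
      have h1 : ‖a‖ = 1 := by
        rw [ha, b.repr.norm_map]
        simpa [hvV] using hφ c
      have h2 : ‖a‖ = Real.sqrt (∑ i, ‖a i‖ ^ 2) := EuclideanSpace.norm_eq a
      have : Real.sqrt (∑ i, ‖a i‖ ^ 2) = 1 := by rw [← h2, h1]
      nlinarith [Real.sq_sqrt (Finset.sum_nonneg fun i (_ : i ∈ Finset.univ) =>
        sq_nonneg ‖a i‖), Finset.sum_nonneg fun i (_ : i ∈ Finset.univ) => sq_nonneg ‖a i‖]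
    calc ‖((P c).orthogonalProjection (φ c) : H)‖ ^ 2
        = ‖T (φ c)‖ ^ 2 := by rw [hTeq]
      _ ≤ (∑ i, ‖a i‖ * ‖T ((b i : V) : H)‖) ^ 2 := by
          exact pow_le_pow_left₀ (norm_nonneg _) hnorm 2
      _ ≤ (∑ i, ‖a i‖ ^ 2) * (∑ i, ‖T ((b i : V) : H)‖ ^ 2) :=
          Finset.sum_mul_sq_le_sq_mul_sq _ _ _
      _ = ∑ i, ‖((P c).orthogonalProjection ((b i : H)) : H)‖ ^ 2 := by
          rw [ha2, one_mul]
          exact Finset.sum_congr rfl fun i _ => by rw [hTeq]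
  calc ∑ c, ‖((P c).orthogonalProjection (φ c) : H)‖ ^ 2
      ≤ ∑ c, ∑ i, ‖((P c).orthogonalProjection ((b i : H)) : H)‖ ^ 2 :=
        Finset.sum_le_sum fun c _ => step1 c
    _ = ∑ i : Fin n, ∑ c, ‖((P c).orthogonalProjection ((b i : H)) : H)‖ ^ 2 :=
        Finset.sum_comm
    _ ≤ ∑ i : Fin n, ‖(b i : H)‖ ^ 2 :=
        Finset.sum_le_sum fun i _ => aux_proj_sum_le P horth _
    _ = ∑ i : Fin n, 1 := by
        refine Finset.sum_congr rfl fun i _ => ?_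
        have := b.orthonormal.1 i
        rw [Submodule.norm_coe] at *
        simp [this]
    _ = (n : ℝ) := by simp
end
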